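/- Let G be a simple connected non-complete graph on n ≥ 4 vertices with normalized Laplacian eigenvalues λ_1 ≥ ... ≥ λ_{n-1} > 0 = λ_n. Suppose λ_1 ≥ θ, λ_2 ≥ β, θ ≥ β, and θ + β(n-2) > n. If α < 0 or α > 1, then ∑_{i=1}^{n-1} λ_i^α ≥ θ^α + β^α + (n-θ-β)^α/(n-3)^{α-1}. -/

import Mathlib

open Matrix Finset

/-- The normalized Laplacian `D^{-1/2} (D - A) D^{-1/2}` of a simple graph. -/
noncomputable def normLap {n : ℕ} (G : SimpleGraph (Fin n)) [DecidableRel G.Adj] :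
    Matrix (Fin n) (Fin n) ℝ :=
  let Dinvhalf : Matrix (Fin n) (Fin n) ℝ :=
    Matrix.diagonal fun i => (Real.sqrt (G.degree i))⁻¹
  Dinvhalf * (Matrix.diagonal (fun i => (G.degree i : ℝ)) - G.adjMatrix ℝ) * Dinvhalf


lemma bern {α t : ℝ} (hα : α < 0 ∨ 1 < α) (ht : 0 < t) :
    1 + α * (t - 1) ≤ t ^ α := by
  rcases hα with hα | hα
  · have h1 : t ^ α = Real.exp (Real.log t * α) := by
      rw [Real.rpow_def_of_pos ht]
    have h2 : 1 + Real.log t * α ≤ Real.exp (Real.log t * α) := by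
      linarith [Real.add_one_le_exp (Real.log t * α)]
    have h3 : Real.log t ≤ t - 1 := Real.log_le_sub_one_of_pos ht
    nlinarith
  · have := one_add_mul_self_le_rpow_one_add (s := t - 1) (by linarith) hα.le
    simpa using this

lemma tangent {α c x : ℝ} (hα : α < 0 ∨ 1 < α) (hc : 0 < c) (hx : 0 < x) :
    c ^ α + α * c ^ (α - 1) * (x - c) ≤ x ^ α := by
  have ht : 0 < x / c := div_pos hx hc
  have hb := bern hα ht
  have hcα : 0 < c ^ α := Real.rpow_pos_of_pos hc α
  have h1 : c ^ α * (x / c) ^ α = x ^ α := by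
    rw [Real.div_rpow hx.le hc.le]
    field_simp
  have h2 : c ^ (α - 1) = c ^ α / c := by
    rw [Real.rpow_sub hc, Real.rpow_one]
  have := mul_le_mul_of_nonneg_left hb hcα.le
  rw [h1] at this
  calc c ^ α + α * c ^ (α - 1) * (x - c)
      = c ^ α * (1 + α * (x / c - 1)) := by rw [h2]; field_simp
    _ ≤ x ^ α := this

lemma slope_mono {α c y : ℝ} (hα : α < 0 ∨ 1 < α) (hc : 0 < c) (hcy : c ≤ y) :
    α * c ^ (α - 1) ≤ α * y ^ (α - 1) := by
  rcases hα with hα | hα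
  · have : y ^ (α - 1) ≤ c ^ (α - 1) :=
      Real.rpow_le_rpow_of_nonpos hc hcy (by linarith)
    nlinarith
  · have : c ^ (α - 1) ≤ y ^ (α - 1) :=
      Real.rpow_le_rpow hc.le hcy (by linarith)
    nlinarith

lemma tangent' {α c y x : ℝ} (hα : α < 0 ∨ 1 < α) (hc : 0 < c) (hcy : c ≤ y) (hyx : y ≤ x) :
    y ^ α + α * c ^ (α - 1) * (x - y) ≤ x ^ α := by
  have hy : 0 < y := lt_of_lt_of_le hc hcy
  have h1 := tangent hα hy (lt_of_lt_of_le hy hyx)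
  have h2 := slope_mono hα hc hcy
  nlinarith [mul_le_mul_of_nonneg_right h2 (sub_nonneg.mpr hyx)]

lemma deg_pos {n : ℕ} (hn : 4 ≤ n) (G : SimpleGraph (Fin n)) [DecidableRel G.Adj]
    (hG : G.Connected) (i : Fin n) : 0 < G.degree i := by
  rw [SimpleGraph.degree_pos_iff_exists_adj]
  have : Nontrivial (Fin n) := Fin.nontrivial_iff_two_le.mpr (by omega)
  obtain ⟨j, hj⟩ := exists_ne i
  obtain ⟨w⟩ := hG.preconnected i j
  cases w with
  | nil => exact absurd rfl hj.symm
  | cons h p => exact ⟨_, h⟩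

lemma normLap_diag {n : ℕ} (hn : 4 ≤ n) (G : SimpleGraph (Fin n)) [DecidableRel G.Adj]
    (hG : G.Connected) (i : Fin n) : normLap G i i = 1 := by
  have hd : (0:ℝ) < G.degree i := by exact_mod_cast deg_pos hn G hG i
  have hs : Real.sqrt (G.degree i) * Real.sqrt (G.degree i) = G.degree i :=
    Real.mul_self_sqrt hd.le
  have hs0 : Real.sqrt (G.degree i) ≠ 0 := by
    intro h; rw [h, mul_zero] at hs; exact hd.ne hs
  simp only [normLap, Matrix.mul_diagonal, Matrix.diagonal_mul, Matrix.sub_apply,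
    Matrix.diagonal_apply_eq, SimpleGraph.adjMatrix_apply, if_neg (G.irrefl (v := i))]
  field_simp
  rw [sub_zero, Real.sq_sqrt hd.le]

lemma trace_normLap {n : ℕ} (hn : 4 ≤ n) (G : SimpleGraph (Fin n)) [DecidableRel G.Adj]
    (hG : G.Connected) : (normLap G).trace = n := by
  rw [Matrix.trace]
  rw [Finset.sum_congr rfl (fun i _ => show (normLap G).diag i = 1 from normLap_diag hn G hG i)]
  simp

lemma sum_eig {n : ℕ} (hn : 4 ≤ n) (G : SimpleGraph (Fin n)) [DecidableRel G.Adj]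
    (hG : G.Connected) (hH : (normLap G).IsHermitian) :
    ∑ i, hH.eigenvalues i = n := by
  have h1 : (normLap G).trace =
      Matrix.trace ((hH.eigenvectorUnitary : Matrix (Fin n) (Fin n) ℝ) *
        Matrix.diagonal (RCLike.ofReal ∘ hH.eigenvalues) *
        (star (hH.eigenvectorUnitary : Matrix (Fin n) (Fin n) ℝ))) := by
    conv_lhs => rw [hH.spectral_theorem]
    rw [Unitary.conjStarAlgAut_apply]
  rw [trace_normLap hn G hG] at h1
  rw [Matrix.trace_mul_cycle,
    Matrix.mem_unitaryGroup_iff'.mp hH.eigenvectorUnitary.2, Matrix.one_mul,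
    Matrix.trace_diagonal] at h1
  simpa using h1.symm

set_option maxHeartbeats 1000000 in
theorem sAlpha_lower_bound_two {n : ℕ} (hn : 4 ≤ n) (G : SimpleGraph (Fin n)) [DecidableRel G.Adj]
    (hG : G.Connected) (hGnc : G ≠ ⊤) (hH : (normLap G).IsHermitian)
    (lam : Fin n → ℝ) (hanti : Antitone lam)
    (hperm : ∃ σ : Equiv.Perm (Fin n), lam = hH.eigenvalues ∘ σ)
    (hlast : lam ⟨n - 1, by omega⟩ = 0) (hpos : lam ⟨n - 2, by omega⟩ > 0)
    (θ β α : ℝ) (hθ1 : lam ⟨0, by omega⟩ ≥ θ) (hβ1 : lam ⟨1, by omega⟩ ≥ β)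
    (hθβ : θ ≥ β) (hsum : θ + β * ((n : ℝ) - 2) > n)
    (hα : α < 0 ∨ 1 < α) :
    (∑ i ∈ Finset.univ.filter (fun i : Fin n => (i : ℕ) < n - 1), lam i ^ α) ≥
      θ ^ α + β ^ α + ((n : ℝ) - θ - β) ^ α / ((n : ℝ) - 3) ^ (α - 1) := by
  have hnR : (4:ℝ) ≤ (n:ℝ) := by exact_mod_cast hn
  have h3 : (0:ℝ) < (n:ℝ) - 3 := by linarith
  set i0 : Fin n := ⟨0, by omega⟩ with hi0
  set i1 : Fin n := ⟨1, by omega⟩ with hi1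
  set ip : Fin n := ⟨n - 2, by omega⟩ with hip
  set il : Fin n := ⟨n - 1, by omega⟩ with hil
  have nonneg : ∀ i : Fin n, 0 ≤ lam i := by
    intro i
    have h := hanti (show i ≤ il by
      simp only [Fin.le_def, hil, Fin.val_mk]; have := i.isLt; omega)
    rw [hlast] at h; exact h
  have hsumall : ∑ i, lam i = n := by
    obtain ⟨σ, hσ⟩ := hperm
    rw [hσ, show ∑ i, (hH.eigenvalues ∘ σ) i = ∑ i, hH.eigenvalues i from
      Equiv.sum_comp σ hH.eigenvalues]
    exact sum_eig hn G hG hH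
  have hSerase : Finset.univ.filter (fun i : Fin n => (i : ℕ) < n - 1)
      = Finset.univ.erase il := by
    ext i
    simp only [Finset.mem_filter, Finset.mem_erase, Finset.mem_univ, true_and, and_true,
      ne_eq, hil, Fin.ext_iff, Fin.val_mk]
    have := i.isLt; omega
  rw [ge_iff_le, hSerase]
  have hfilter : ∑ i ∈ Finset.univ.erase il, lam i = n := by
    rw [Finset.sum_erase_eq_sub (Finset.mem_univ _), hsumall, hil, hlast, sub_zero]
  have hposS : ∀ i ∈ Finset.univ.erase il, 0 < lam i := by
    intro i hi
    rw [Finset.mem_erase] at hi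
    have hvi : (i : ℕ) ≠ n - 1 := by
      intro h; exact hi.1 (by simp only [hil, Fin.ext_iff, Fin.val_mk]; exact h)
    have h := hanti (show i ≤ ip by
      simp only [Fin.le_def, hip, Fin.val_mk]; have := i.isLt; omega)
    exact lt_of_lt_of_le hpos h
  -- θ + β < n
  have hd01 : i0 ≠ i1 := by simp only [hi0, hi1, ne_eq, Fin.ext_iff, Fin.val_mk]; omega
  have hd0p : i0 ≠ ip := by simp only [hi0, hip, ne_eq, Fin.ext_iff, Fin.val_mk]; omega
  have hd1p : i1 ≠ ip := by simp only [hi1, hip, ne_eq, Fin.ext_iff, Fin.val_mk]; omega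
  have hT : lam i0 + lam i1 + lam ip ≤ n := by
    have hsub : ∑ i ∈ ({i0, i1, ip} : Finset (Fin n)), lam i ≤ ∑ i, lam i :=
      Finset.sum_le_sum_of_subset_of_nonneg (Finset.subset_univ _) (fun i _ _ => nonneg i)
    rw [Finset.sum_insert (by simp [hd01, hd0p]),
      Finset.sum_insert (by simp [hd1p]), Finset.sum_singleton, hsumall] at hsub
    linarith
  have hθβn : θ + β < (n:ℝ) := by
    have h0 : θ ≤ lam i0 := hθ1
    have h1 : β ≤ lam i1 := hβ1
    linarith [hpos]
  obtain ⟨c, hc_def⟩ : ∃ c : ℝ, c = ((n:ℝ) - θ - β) / ((n:ℝ) - 3) := ⟨_, rfl⟩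
  have hc : 0 < c := by rw [hc_def]; exact div_pos (by linarith) h3
  have hcn : ((n:ℝ) - 3) * c = (n:ℝ) - θ - β := by
    rw [hc_def]; field_simp
  have hβc : c < β := by
    rw [hc_def, div_lt_iff₀ h3]; nlinarith
  have hcθ : c ≤ θ := le_trans hβc.le hθβ
  obtain ⟨K, hK⟩ : ∃ K : ℝ, K = α * c ^ (α - 1) := ⟨_, rfl⟩
  -- split the index set
  have hmem0 : i0 ∈ Finset.univ.erase il := by
    simp only [Finset.mem_erase, Finset.mem_univ, and_true, ne_eq, hi0, hil,
      Fin.ext_iff, Fin.val_mk]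
    omega
  have hmem1 : i1 ∈ (Finset.univ.erase il).erase i0 := by
    simp only [Finset.mem_erase, Finset.mem_univ, and_true, ne_eq, hi0, hi1, hil,
      Fin.ext_iff, Fin.val_mk]
    omega
  have hcardS : (Finset.univ.erase il).card = n - 1 := by
    rw [Finset.card_erase_of_mem (Finset.mem_univ _), Finset.card_univ, Fintype.card_fin]
  have hcardS' : (((Finset.univ.erase il).erase i0).erase i1).card = n - 3 := by
    rw [Finset.card_erase_of_mem hmem1, Finset.card_erase_of_mem hmem0, hcardS]
    omega
  have hcardR : (((((Finset.univ.erase il).erase i0).erase i1).card : ℕ) : ℝ)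
      = (n:ℝ) - 3 := by
    rw [hcardS']
    push_cast [Nat.cast_sub (by omega : 3 ≤ n)]
    ring
  have hsplit : ∀ f : Fin n → ℝ, ∑ i ∈ Finset.univ.erase il, f i
      = f i0 + (f i1 + ∑ i ∈ ((Finset.univ.erase il).erase i0).erase i1, f i) := by
    intro f
    rw [← Finset.add_sum_erase _ f hmem0, ← Finset.add_sum_erase _ f hmem1]
  have hsumS' : ∑ i ∈ ((Finset.univ.erase il).erase i0).erase i1, lam i
      = (n:ℝ) - lam i0 - lam i1 := by
    have h := hsplit lam; rw [hfilter] at h; linarith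
  -- per-element tangent-line bounds
  have k0 : θ ^ α + K * (lam i0 - θ) ≤ lam i0 ^ α := by
    rw [hK]; exact tangent' hα hc hcθ hθ1
  have k1 : β ^ α + K * (lam i1 - β) ≤ lam i1 ^ α := by
    rw [hK]; exact tangent' hα hc hβc.le hβ1
  have kS' : ∑ i ∈ ((Finset.univ.erase il).erase i0).erase i1, (c ^ α + K * (lam i - c))
      ≤ ∑ i ∈ ((Finset.univ.erase il).erase i0).erase i1, lam i ^ α := by
    refine Finset.sum_le_sum (fun i hi => ?_)
    have hiS : i ∈ Finset.univ.erase il :=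
      Finset.mem_of_mem_erase (Finset.mem_of_mem_erase hi)
    rw [hK]; exact tangent hα hc (hposS i hiS)
  have hexp : ∑ i ∈ ((Finset.univ.erase il).erase i0).erase i1, (c ^ α + K * (lam i - c)) =
      ((n:ℝ) - 3) * c ^ α + K * (((n:ℝ) - lam i0 - lam i1) - ((n:ℝ) - 3) * c) := by
    rw [Finset.sum_add_distrib, Finset.sum_const, nsmul_eq_mul, hcardR, ← Finset.mul_sum,
      Finset.sum_sub_distrib, Finset.sum_const, nsmul_eq_mul, hcardR, hsumS']
  -- combine
  have main : θ ^ α + β ^ α + ((n:ℝ) - 3) * c ^ α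
      ≤ ∑ i ∈ Finset.univ.erase il, lam i ^ α := by
    rw [hsplit (fun i => lam i ^ α)]
    have hzero : (lam i0 - θ) + (lam i1 - β) + (((n:ℝ) - lam i0 - lam i1) - ((n:ℝ) - 3) * c)
        = 0 := by rw [hcn]; ring
    have hz2 : K * (lam i0 - θ) + K * (lam i1 - β)
        + K * (((n:ℝ) - lam i0 - lam i1) - ((n:ℝ) - 3) * c) = 0 := by
      have h' : K * (lam i0 - θ) + K * (lam i1 - β)
          + K * (((n:ℝ) - lam i0 - lam i1) - ((n:ℝ) - 3) * c)
          = K * ((lam i0 - θ) + (lam i1 - β)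
            + (((n:ℝ) - lam i0 - lam i1) - ((n:ℝ) - 3) * c)) := by ring
      rw [h', hzero, mul_zero]
    linarith [kS', hexp, hz2]
  -- identify the right-hand side
  have hrhs : ((n:ℝ) - 3) * c ^ α = ((n:ℝ) - θ - β) ^ α / ((n:ℝ) - 3) ^ (α - 1) := by
    rw [hc_def, Real.div_rpow (by linarith) h3.le]
    rw [show ((n:ℝ) - 3) ^ α = ((n:ℝ) - 3) ^ (α - 1) * ((n:ℝ) - 3) by
      rw [← Real.rpow_add_one h3.ne' (α - 1)]; ring_nf]
    have hp : (0:ℝ) < ((n:ℝ) - 3) ^ (α - 1) := Real.rpow_pos_of_pos h3 _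
    field_simp
  rw [← hrhs]
  exact main
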